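/- For generic rational u, setting a = (u²−1)/(2u−1) and x₀ = (u²−1)/(u²−u+1), the point (x₀, −x₀) is a periodic point of the Lyness map F_a(x,y) = (y, (a+y)/x) of period 7: F_a^7(x₀, −x₀) = (x₀, −x₀), provided all iterates are defined. -/

import Mathlib

/-- The Lyness map `F_a(x,y) = (y, (a+y)/x)`. -/
def lyness (a : ℚ) (p : ℚ × ℚ) : ℚ × ℚ := (p.2, (a + p.2) / p.1)

/-- For generic `u`, with `a = (u²-1)/(2u-1)` and `x₀ = (u²-1)/(u²-u+1)`,
the point `(x₀, -x₀)` is 7-periodic under `F_a`, provided all iterates are defined. -/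
theorem lyness_period_seven (u : ℚ) (h1 : 2*u - 1 ≠ 0) (h2 : u^2 - u + 1 ≠ 0)
    (hdef : ∀ k, k < 7 →
      ((lyness ((u^2 - 1)/(2*u - 1)))^[k]
        ((u^2 - 1)/(u^2 - u + 1), -((u^2 - 1)/(u^2 - u + 1)))).1 ≠ 0) :
    (lyness ((u^2 - 1)/(2*u - 1)))^[7]
        ((u^2 - 1)/(u^2 - u + 1), -((u^2 - 1)/(u^2 - u + 1)))
      = ((u^2 - 1)/(u^2 - u + 1), -((u^2 - 1)/(u^2 - u + 1))) := by
  set a : ℚ := (u^2 - 1)/(2*u - 1) with ha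
  set x0 : ℚ := (u^2 - 1)/(u^2 - u + 1) with hx0
  have h0 : x0 ≠ 0 := by simpa using hdef 0 (by norm_num)
  have hsq : u^2 - 1 ≠ 0 := (div_ne_zero_iff.mp h0).1
  have hfac1 : (u - 1) * (u + 1) ≠ 0 := by
    rw [show (u - 1) * (u + 1) = u^2 - 1 by ring]; exact hsq
  have hu1 : u - 1 ≠ 0 := (mul_ne_zero_iff.mp hfac1).1
  have hu1' : u + 1 ≠ 0 := (mul_ne_zero_iff.mp hfac1).2
  have h1' : u * 2 - 1 ≠ 0 := by rw [show u * 2 - 1 = 2*u - 1 by ring]; exact h1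
  have h2' : u * (u - 1) + 1 ≠ 0 := by rw [show u * (u - 1) + 1 = u^2 - u + 1 by ring]; exact h2
  set y1 : ℚ := (u^2 - 3*u + 2)/(2*u - 1) with hy1
  set y2 : ℚ := (-(u^2 - u + 1))/(u + 1) with hy2
  set y3 : ℚ := (2*u - u^2)/(u^2 - 1) with hy3
  set y4 : ℚ := (-(u^2 - u + 1))/((2*u - 1)*(u - 1)) with hy4
  set y5 : ℚ := (-(u^2 + u))/(2*u - 1) with hy5
  have hx0n : -x0 ≠ 0 := neg_ne_zero.mpr h0
  have hy2ne : y2 ≠ 0 := div_ne_zero (neg_ne_zero.mpr h2) hu1'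
  have hy4ne : y4 ≠ 0 := div_ne_zero (neg_ne_zero.mpr h2) (mul_ne_zero h1 hu1)
  have e1 : lyness a (x0, -x0) = (-x0, y1) := by
    simp only [lyness, Prod.mk.injEq]
    refine ⟨trivial, ?_⟩
    rw [div_eq_iff h0, ha, hx0, hy1]
    field_simp
    ring
  have e2 : lyness a (-x0, y1) = (y1, y2) := by
    simp only [lyness, Prod.mk.injEq]
    refine ⟨trivial, ?_⟩
    rw [div_eq_iff hx0n, ha, hx0, hy1, hy2]
    field_simp
    ring
  have i2 : (lyness a)^[2] (x0, -x0) = (y1, y2) := by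
    simp only [Function.iterate_succ, Function.iterate_zero, Function.comp_apply, id_eq,
      e1, e2]
  have hy1ne : y1 ≠ 0 := by
    have := hdef 2 (by norm_num)
    rw [i2] at this
    simpa using this
  have hnum1 : u^2 - 3*u + 2 ≠ 0 := (div_ne_zero_iff.mp hy1ne).1
  have hfac2 : (u - 1) * (u - 2) ≠ 0 := by
    rw [show (u - 1) * (u - 2) = u^2 - 3*u + 2 by ring]; exact hnum1
  have hu2 : u - 2 ≠ 0 := (mul_ne_zero_iff.mp hfac2).2
  have e3 : lyness a (y1, y2) = (y2, y3) := by
    simp only [lyness, Prod.mk.injEq]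
    refine ⟨trivial, ?_⟩
    rw [div_eq_iff hy1ne, ha, hy1, hy2, hy3]
    field_simp
    ring
  have e4 : lyness a (y2, y3) = (y3, y4) := by
    simp only [lyness, Prod.mk.injEq]
    refine ⟨trivial, ?_⟩
    rw [div_eq_iff hy2ne, ha, hy2, hy3, hy4]
    field_simp
    ring
  have i4 : (lyness a)^[4] (x0, -x0) = (y3, y4) := by
    simp only [Function.iterate_succ, Function.iterate_zero, Function.comp_apply, id_eq,
      e1, e2, e3, e4]
  have hy3ne : y3 ≠ 0 := by
    have := hdef 4 (by norm_num)
    rw [i4] at this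
    simpa using this
  have hnum3 : 2*u - u^2 ≠ 0 := (div_ne_zero_iff.mp hy3ne).1
  have hfac3 : u * (2 - u) ≠ 0 := by
    rw [show u * (2 - u) = 2*u - u^2 by ring]; exact hnum3
  have hu0 : u ≠ 0 := (mul_ne_zero_iff.mp hfac3).1
  have hy5ne : y5 ≠ 0 := by
    refine div_ne_zero ?_ h1
    rw [show -(u^2 + u) = -(u * (u + 1)) by ring]
    exact neg_ne_zero.mpr (mul_ne_zero hu0 hu1')
  have e5 : lyness a (y3, y4) = (y4, y5) := by
    simp only [lyness, Prod.mk.injEq]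
    refine ⟨trivial, ?_⟩
    rw [div_eq_iff hy3ne, ha, hy3, hy4, hy5]
    field_simp
    ring
  have e6 : lyness a (y4, y5) = (y5, x0) := by
    simp only [lyness, Prod.mk.injEq]
    refine ⟨trivial, ?_⟩
    rw [div_eq_iff hy4ne, ha, hy4, hy5, hx0]
    field_simp
    ring
  have e7 : lyness a (y5, x0) = (x0, -x0) := by
    simp only [lyness, Prod.mk.injEq]
    refine ⟨trivial, ?_⟩
    rw [div_eq_iff hy5ne, ha, hy5, hx0]
    field_simp
    ring
  simp only [Function.iterate_succ, Function.iterate_zero, Function.comp_apply, id_eq,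
    e1, e2, e3, e4, e5, e6, e7]
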